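/- For every n ≥ 1, the tuple (d; m₁, …, m_M) := (g_{n+1}; W(g_{n+2}, g_n)) satisfies the two Diophantine conditions d² + 1 = Σ_{i} m_i² and 3d − 1 = Σ_{i} m_i. -/
import Mathlib

/-- The odd-indexed Fibonacci numbers: `g n = fib (2n-1)` for `n ≥ 1`, with `g 0 = 1`. -/
def g : ℕ → ℕ
  | 0 => 1
  | (n+1) => Nat.fib (2*n+1)

/-- The label sequence `W(p,q)`, defined by the Euclidean recursion: if `q ∣ p` then `q`
repeated `p/q` times; otherwise `q` repeated `⌊p/q⌋` times followed by `W q (p % q)`. -/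
def W (p q : ℕ) : List ℕ :=
  if hq : q = 0 then []
  else if p % q = 0 then List.replicate (p / q) q
  else List.replicate (p / q) q ++ W q (p % q)
termination_by q
decreasing_by exact Nat.mod_lt _ (Nat.pos_of_ne_zero hq)

/-- Sum of squares of `W p q` is `p * q`. -/
lemma W_sumsq : ∀ q, 0 < q → ∀ p, ((W p q).map (fun m => m^2)).sum = p * q := by
  intro q
  induction q using Nat.strong_induction_on with
  | _ q ih =>
    intro hq p
    rw [W]
    rw [dif_neg (Nat.pos_iff_ne_zero.mp hq)]
    by_cases h : p % q = 0
    · rw [if_pos h]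
      have hdvd : q ∣ p := Nat.dvd_of_mod_eq_zero h
      rw [List.map_replicate, List.sum_replicate, smul_eq_mul, pow_two,
        ← mul_assoc, Nat.div_mul_cancel hdvd]
    · rw [if_neg h]
      rw [List.map_append, List.sum_append, List.map_replicate, List.sum_replicate,
        smul_eq_mul]
      rw [ih (p % q) (Nat.mod_lt _ hq) (Nat.pos_of_ne_zero h) q]
      have hd := Nat.div_add_mod p q
      calc p / q * q ^ 2 + q * (p % q) = (q * (p/q) + p % q) * q := by ring
        _ = p * q := by rw [hd]

/-- Sum of `W p q` is `p + q - gcd p q`. -/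
lemma W_sum : ∀ q, 0 < q → ∀ p, (W p q).sum = p + q - Nat.gcd p q := by
  intro q
  induction q using Nat.strong_induction_on with
  | _ q ih =>
    intro hq p
    rw [W]
    rw [dif_neg (Nat.pos_iff_ne_zero.mp hq)]
    by_cases h : p % q = 0
    · rw [if_pos h]
      have hdvd : q ∣ p := Nat.dvd_of_mod_eq_zero h
      rw [List.sum_replicate, smul_eq_mul, Nat.div_mul_cancel hdvd,
        Nat.gcd_eq_right hdvd]
      omega
    · rw [if_neg h]
      rw [List.sum_append, List.sum_replicate, smul_eq_mul]
      rw [ih (p % q) (Nat.mod_lt _ hq) (Nat.pos_of_ne_zero h) q]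
      have hgcd : Nat.gcd p q = Nat.gcd (p % q) q := by
        rw [Nat.gcd_comm p q, Nat.gcd_rec]
      have h1 : Nat.gcd (p % q) q ≤ q := Nat.gcd_le_right _ hq
      have hd := Nat.div_add_mod p q
      have h2 : p / q * q = q * (p / q) := mul_comm _ _
      rw [Nat.gcd_comm q (p % q), hgcd]
      omega

lemma fib_step (k : ℕ) : Nat.fib (k+2) = Nat.fib k + Nat.fib (k+1) := Nat.fib_add_two

/-- Catalan's identity: `fib(2m+3)² + 1 = fib(2m+5) · fib(2m+1)`. -/
lemma cassini (m : ℕ) : Nat.fib (2*m+3)^2 + 1 = Nat.fib (2*m+5) * Nat.fib (2*m+1) := by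
  induction m with
  | zero => norm_num [Nat.fib]
  | succ m ih =>
    have e1 : Nat.fib (2*m+3) = Nat.fib (2*m+1) + Nat.fib (2*m+2) := fib_step (2*m+1)
    have e2 : Nat.fib (2*m+4) = Nat.fib (2*m+2) + Nat.fib (2*m+3) := fib_step (2*m+2)
    have e3 : Nat.fib (2*m+5) = Nat.fib (2*m+3) + Nat.fib (2*m+4) := fib_step (2*m+3)
    have e4 : Nat.fib (2*m+6) = Nat.fib (2*m+4) + Nat.fib (2*m+5) := fib_step (2*m+4)
    have e5 : Nat.fib (2*m+7) = Nat.fib (2*m+5) + Nat.fib (2*m+6) := fib_step (2*m+5)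
    have h1 : 2*(m+1)+3 = 2*m+5 := by ring
    have h2 : 2*(m+1)+5 = 2*m+7 := by ring
    have h3 : 2*(m+1)+1 = 2*m+3 := by ring
    rw [h1, h2, h3]
    rw [e3, e2, e1] at ih
    rw [e5, e4, e3, e2, e1]
    nlinarith [ih]

/-- `fib(2m+5) + fib(2m+1) = 3 · fib(2m+3)`. -/
lemma three_fib (m : ℕ) : Nat.fib (2*m+5) + Nat.fib (2*m+1) = 3 * Nat.fib (2*m+3) := by
  have e1 : Nat.fib (2*m+3) = Nat.fib (2*m+1) + Nat.fib (2*m+2) := fib_step (2*m+1)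
  have e2 : Nat.fib (2*m+4) = Nat.fib (2*m+2) + Nat.fib (2*m+3) := fib_step (2*m+2)
  have e3 : Nat.fib (2*m+5) = Nat.fib (2*m+3) + Nat.fib (2*m+4) := fib_step (2*m+3)
  omega

/-- `fib(2m+5)` and `fib(2m+1)` are coprime. -/
lemma fib_cop (m : ℕ) : Nat.gcd (Nat.fib (2*m+5)) (Nat.fib (2*m+1)) = 1 := by
  rw [← Nat.fib_gcd]
  have h : Nat.gcd (2*m+5) (2*m+1) = 1 := by
    have : 2*m+5 = 4 + (2*m+1) := by ring
    rw [this, Nat.gcd_add_self_left]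
    have h4 : (2*m+1) % 4 = 1 ∨ (2*m+1) % 4 = 3 := by omega
    rw [Nat.gcd_rec]
    rcases h4 with h4 | h4 <;> rw [h4] <;> norm_num
  rw [h, Nat.fib_one]

/-- the tuple `E(b_n) = (g_{n+1}; W(g_{n+2}, g_n))` satisfies the Diophantine
conditions `d² + 1 = Σ mᵢ²` and `3d − 1 = Σ mᵢ`. -/
theorem Ebn_diophantine (n : ℕ) (hn : 1 ≤ n) :
    (g (n+1))^2 + 1 = ((W (g (n+2)) (g n)).map (fun m => m^2)).sum ∧
    3 * g (n+1) - 1 = (W (g (n+2)) (g n)).sum := by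
  obtain ⟨m, rfl⟩ : ∃ m, n = m + 1 := ⟨n - 1, by omega⟩
  have hg0 : g (m+1) = Nat.fib (2*m+1) := rfl
  have hg1 : g (m+1+1) = Nat.fib (2*m+3) := by
    show Nat.fib (2*(m+1)+1) = Nat.fib (2*m+3)
    congr 1
  have hg2 : g (m+1+2) = Nat.fib (2*m+5) := by
    show Nat.fib (2*(m+2)+1) = Nat.fib (2*m+5)
    congr 1
  have hq : 0 < Nat.fib (2*m+1) := Nat.fib_pos.mpr (by omega)
  rw [hg0, hg1, hg2]
  constructor
  · rw [W_sumsq _ hq]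
    exact cassini m
  · rw [W_sum _ hq, fib_cop m]
    have h3 := three_fib m
    omega
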